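/- Let (a_n) be an arithmetic sequence, (e_n) an arithmetic-type sequence associated with (a_n). If t_{(e_n)}(𝕋) contains an element whose support is infinite, then t_{(e_n)}(𝕋) contains an element y whose support is infinite and satisfies: supp(y) ∩ (supp(y) + 1) = ∅, supp(y) is q-divergent, and c_n(y)/q_n → 0 as n → ∞ along supp(y), where (c_n(y)) are the canonical digits of y. -/

import Mathlib

open Filter Topology

noncomputable section

/-- The circle group `𝕋 = ℝ/ℤ`. -/
abbrev Circle1 : Type := AddCircle (1 : ℝ)

/-- An arithmetic sequence `(a_n)_{n ≥ 1}`, with the convention `a 0 = 1`: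
a strictly increasing sequence of positive integers with `1 < a 1` and `a n ∣ a (n+1)`. -/
def IsArithSeq (a : ℕ → ℕ) : Prop :=
  a 0 = 1 ∧ StrictMono a ∧ ∀ n, a n ∣ a (n + 1)

/-- The ratio sequence: `q n = a n / a (n-1)` (so `q 1 = a 1`). -/
def ratioSeq (a : ℕ → ℕ) (n : ℕ) : ℕ := a n / a (n - 1)

/-- The subgroup of `𝕋` characterized by a sequence of integers `(u n)`. -/
def charSub (u : ℕ → ℕ) : Set Circle1 :=
  {x : Circle1 | Tendsto (fun n => (u n) • x) atTop (nhds 0)}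

/-- The set `{r·a_{k-1} : k ≥ 1, 1 ≤ r ≤ q_k - 1}` whose increasing enumeration is `(d_n)`. -/
def DSet (a : ℕ → ℕ) : Set ℕ :=
  {m | ∃ k, 1 ≤ k ∧ ∃ r, 1 ≤ r ∧ r ≤ ratioSeq a k - 1 ∧ m = r * a (k - 1)}

/-- `(d_n)` is the strictly increasing enumeration of `DSet a`. -/
def IsDSeq (a d : ℕ → ℕ) : Prop := StrictMono d ∧ Set.range d = DSet a

/-- An arithmetic-type sequence associated with the arithmetic sequence `(a_n)`:
a strictly increasing sequence of positive integers whose set of values contains all the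
values `a k` (for `k ≥ 1`) and is contained in `DSet a`. -/
def IsArithTypeSeq (a e : ℕ → ℕ) : Prop :=
  StrictMono e ∧ (∀ k, 1 ≤ k → a k ∈ Set.range e) ∧ Set.range e ⊆ DSet a

/-- `(c_n)_{n ≥ 1}` is the canonical representation of `x ∈ 𝕋` w.r.t. the arithmetic
sequence `(a_n)`: `0 ≤ c n ≤ q n - 1` for all `n ≥ 1`, `c n < q n - 1` infinitely often,
and `x = Σ_{n ≥ 1} c n / a n` in `𝕋`. -/
def IsCanonicalRep (a c : ℕ → ℕ) (x : Circle1) : Prop :=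
  (∀ n, 1 ≤ n → c n ≤ ratioSeq a n - 1) ∧
  {n | 1 ≤ n ∧ c n < ratioSeq a n - 1}.Infinite ∧
  x = ((∑' n : ℕ, (c (n + 1) : ℝ) / (a (n + 1) : ℝ) : ℝ) : Circle1)

/-- The support of a digit sequence: `supp(x) = {n ≥ 1 : c n ≠ 0}`. -/
def suppOf (c : ℕ → ℕ) : Set ℕ := {n | 1 ≤ n ∧ c n ≠ 0}

namespace ST14

/-! ### Circle norm helpers -/

lemma coe_nat_zero (n : ℕ) : ((n : ℝ) : Circle1) = 0 := by
  rw [AddCircle.coe_eq_zero_iff]; exact ⟨n, by simp⟩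

lemma norm_coe_le (t : ℝ) : ‖(t : Circle1)‖ ≤ |t| := by
  rw [AddCircle.norm_eq]; simpa using round_le t 0

lemma norm_coe_le_of_nonneg {t : ℝ} (h : 0 ≤ t) : ‖(t : Circle1)‖ ≤ t :=
  (norm_coe_le t).trans_eq (abs_of_nonneg h)

lemma norm_coe_min {t : ℝ} (h0 : 0 ≤ t) (h1 : t ≤ 1) : ‖(t : Circle1)‖ = min t (1 - t) := by
  rw [AddCircle.norm_eq]
  simp only [inv_one, one_mul, mul_one]
  rcases eq_or_lt_of_le h1 with h | h
  · subst h; norm_num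
  · rw [abs_sub_round_eq_min, Int.fract_eq_self.2 ⟨h0, h⟩]

lemma coe_smul (u : ℕ) (t : ℝ) : (u : ℕ) • ((t : ℝ) : Circle1) = (((u * t) : ℝ) : Circle1) := by
  rw [← AddCircle.coe_nsmul]; norm_num

lemma norm_coe_add_le (s t : ℝ) :
    ‖((s + t : ℝ) : Circle1)‖ ≤ ‖(s : Circle1)‖ + ‖(t : Circle1)‖ := by
  rw [show ((s + t : ℝ) : Circle1) = (s : Circle1) + (t : Circle1) from rfl]
  exact norm_add_le _ _

lemma norm_coe_nat_sub (r : ℕ) (w : ℝ) :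
    ‖(((r : ℝ) - w : ℝ) : Circle1)‖ = ‖(w : Circle1)‖ := by
  rw [show (((r : ℝ) - w : ℝ) : Circle1) = ((r : ℝ) : Circle1) - (w : Circle1) from rfl,
    coe_nat_zero, zero_sub, norm_neg]

/-! ### Arithmetic sequence basics -/

variable {a c : ℕ → ℕ}

lemma apos (ha : IsArithSeq a) : ∀ n, 0 < a n := fun n =>
  lt_of_lt_of_le (by omega : 0 < 1) (ha.1 ▸ ha.2.1.monotone (Nat.zero_le n))

lemma age (ha : IsArithSeq a) (n : ℕ) : n + 1 ≤ a n := by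
  induction n with
  | zero => simp [ha.1]
  | succ n ih =>
    have h : a n < a (n + 1) := ha.2.1 (by omega)
    omega

lemma amul (ha : IsArithSeq a) (n : ℕ) (hn : 1 ≤ n) : ratioSeq a n * a (n - 1) = a n := by
  have hd : a (n - 1) ∣ a n := by
    have := ha.2.2 (n - 1); rwa [show n - 1 + 1 = n by omega] at this
  exact Nat.div_mul_cancel hd

lemma aq2 (ha : IsArithSeq a) (n : ℕ) (hn : 1 ≤ n) : 2 ≤ ratioSeq a n := by
  have h1 := amul ha n hn
  have h2 : a (n - 1) < a n := ha.2.1 (by omega)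
  have h3 := apos ha (n - 1)
  by_contra h
  push_neg at h
  have h4 : ratioSeq a n * a (n - 1) ≤ 1 * a (n - 1) :=
    Nat.mul_le_mul_right _ (by omega)
  simp only [one_mul] at h4
  omega

lemma adv (ha : IsArithSeq a) {i j : ℕ} (h : i ≤ j) : a i ∣ a j := by
  induction j with
  | zero => rw [Nat.le_zero.1 h]
  | succ j ih =>
    rcases Nat.lt_or_ge i (j + 1) with h' | h'
    · exact (ih (by omega)).trans (ha.2.2 j)
    · rw [Nat.le_antisymm h h']

lemma armul (ha : IsArithSeq a) (n : ℕ) (hn : 1 ≤ n) :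
    (a n : ℝ) = (ratioSeq a n : ℝ) * (a (n - 1) : ℝ) := by
  exact_mod_cast congrArg (Nat.cast : ℕ → ℝ) (amul ha n hn).symm

/-! ### Digit tails -/

def dtail (a c : ℕ → ℕ) (j : ℕ) : ℝ := ∑' n, (c (n + j + 1) : ℝ) / (a (n + j + 1) : ℝ)

lemma htel (ha : IsArithSeq a) (j : ℕ) :
    HasSum (fun n => 1 / (a (n + j) : ℝ) - 1 / (a (n + j + 1) : ℝ)) (1 / (a j : ℝ)) := by
  rw [hasSum_iff_tendsto_nat_of_nonneg]
  · have hev : (fun N => ∑ i ∈ Finset.range N,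
        (1 / (a (i + j) : ℝ) - 1 / (a (i + j + 1) : ℝ)))
        = fun N => 1 / (a j : ℝ) - 1 / (a (N + j) : ℝ) := by
      funext N
      have h1 : ∑ i ∈ Finset.range N, (1 / (a (i + j) : ℝ) - 1 / (a (i + j + 1) : ℝ))
          = ∑ i ∈ Finset.range N, (1 / (a (i + j) : ℝ) - 1 / (a (i + 1 + j) : ℝ)) :=
        Finset.sum_congr rfl (fun i _ => by rw [show i + j + 1 = i + 1 + j by omega])
      rw [h1]
      have := Finset.sum_range_sub' (fun i => 1 / (a (i + j) : ℝ)) N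
      simp only [Nat.zero_add] at this
      exact this
    rw [hev]
    have h0 : Tendsto (fun N : ℕ => 1 / (a (N + j) : ℝ)) atTop (𝓝 0) := by
      apply squeeze_zero (fun N => by positivity) (g := fun N : ℕ => 1 / ((N : ℝ) + 1))
      · intro N
        apply one_div_le_one_div_of_le (by positivity)
        have := age ha (N + j)
        have : ((N + j : ℕ) : ℝ) + 1 ≤ (a (N + j) : ℝ) := by exact_mod_cast this
        push_cast at this ⊢
        linarith
      · exact tendsto_one_div_add_atTop_nhds_zero_nat
    simpa using tendsto_const_nhds.sub h0
  · intro i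
    have h1 : (a (i + j) : ℝ) ≤ a (i + j + 1) := by
      exact_mod_cast (ha.2.1 (Nat.lt_succ_self (i + j))).le
    have h2 : (0 : ℝ) < a (i + j) := by exact_mod_cast apos ha (i + j)
    have := one_div_le_one_div_of_le h2 h1
    linarith

lemma dterm_nonneg (n : ℕ) : (0 : ℝ) ≤ (c (n + 1) : ℝ) / (a (n + 1) : ℝ) := by positivity

lemma dterm_le (ha : IsArithSeq a) (hc : ∀ n, 1 ≤ n → c n ≤ ratioSeq a n - 1) (n : ℕ) :
    (c (n + 1) : ℝ) / (a (n + 1) : ℝ) ≤ 1 / (a n : ℝ) - 1 / (a (n + 1) : ℝ) := by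
  have hq2 := aq2 ha (n + 1) (by omega)
  have hcb := hc (n + 1) (by omega)
  have hC : (c (n + 1) : ℝ) ≤ (ratioSeq a (n + 1) : ℝ) - 1 := by
    have h' : c (n + 1) + 1 ≤ ratioSeq a (n + 1) := by omega
    have h'' := (Nat.cast_le (α := ℝ)).2 h'
    push_cast at h''; linarith
  have hA : (a (n + 1) : ℝ) = (ratioSeq a (n + 1) : ℝ) * (a n : ℝ) := by
    have := armul ha (n + 1) (by omega); simpa using this
  have hapos : (0 : ℝ) < a n := by exact_mod_cast apos ha n
  have hapos1 : (0 : ℝ) < a (n + 1) := by exact_mod_cast apos ha (n + 1)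
  rw [div_le_iff₀ hapos1]
  have expand : (1 / (a n : ℝ) - 1 / (a (n + 1) : ℝ)) * (a (n + 1) : ℝ)
      = (ratioSeq a (n + 1) : ℝ) - 1 := by
    field_simp [hA]
    rw [hA]; ring
  rw [expand]; exact hC

lemma dsummable (ha : IsArithSeq a) (hc : ∀ n, 1 ≤ n → c n ≤ ratioSeq a n - 1) (j : ℕ) :
    Summable (fun n => (c (n + j + 1) : ℝ) / (a (n + j + 1) : ℝ)) := by
  apply Summable.of_nonneg_of_le (fun n => dterm_nonneg (n + j))
    (fun n => dterm_le ha hc (n + j))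
  exact ((htel ha j).summable.congr (fun n => rfl))

lemma dtail_nonneg (j : ℕ) : 0 ≤ dtail a c j :=
  tsum_nonneg fun n => dterm_nonneg (n + j)

lemma dtail_le (ha : IsArithSeq a) (hc : ∀ n, 1 ≤ n → c n ≤ ratioSeq a n - 1) (j : ℕ) :
    dtail a c j ≤ 1 / (a j : ℝ) := by
  have h := Summable.tsum_le_tsum (f := fun n => (c (n + j + 1) : ℝ) / (a (n + j + 1) : ℝ))
    (g := fun n => 1 / (a (n + j) : ℝ) - 1 / (a (n + j + 1) : ℝ))
    (fun n => dterm_le ha hc (n + j)) (dsummable ha hc j) (htel ha j).summable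
  calc dtail a c j ≤ _ := h
    _ = 1 / (a j : ℝ) := (htel ha j).tsum_eq

lemma dtail_succ (ha : IsArithSeq a) (hc : ∀ n, 1 ≤ n → c n ≤ ratioSeq a n - 1) (j : ℕ) :
    dtail a c j = (c (j + 1) : ℝ) / (a (j + 1) : ℝ) + dtail a c (j + 1) := by
  unfold dtail
  rw [Summable.tsum_eq_zero_add (dsummable ha hc j)]
  congr 1
  · simp
  · apply tsum_congr; intro n
    rw [show n + 1 + j + 1 = n + (j + 1) + 1 by omega]

lemma dtail_congr_zero (ha : IsArithSeq a) (hc : ∀ n, 1 ≤ n → c n ≤ ratioSeq a n - 1)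
    {j j' : ℕ} (h : j ≤ j')
    (hz : ∀ t, j < t → t ≤ j' → c t = 0) : dtail a c j = dtail a c j' := by
  induction j' with
  | zero => rw [Nat.le_zero.1 h]
  | succ j' ih =>
    rcases Nat.lt_or_ge j (j' + 1) with h' | h'
    · have step : dtail a c j' = dtail a c (j' + 1) := by
        rw [dtail_succ ha hc j', hz (j' + 1) (by omega) (le_refl _)]
        simp
      rw [← step]
      exact ih (by omega) (fun t ht ht' => hz t ht (by omega))
    · rw [Nat.le_antisymm h h']

lemma smul_tsum (ha : IsArithSeq a) (hc : ∀ n, 1 ≤ n → c n ≤ ratioSeq a n - 1)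
    {u k : ℕ} (hu : a k ∣ u) :
    (u : ℕ) • ((∑' n, ((c (n + 1) : ℝ) / (a (n + 1) : ℝ)) : ℝ) : Circle1)
      = (((u : ℝ) * dtail a c k : ℝ) : Circle1) := by
  have hsum : Summable (fun n => (c (n + 1) : ℝ) / (a (n + 1) : ℝ)) := by
    have := dsummable ha hc 0
    exact this.congr (fun n => by rw [show n + 0 + 1 = n + 1 by omega])
  have hsplit : (∑ i ∈ Finset.range k, (c (i + 1) : ℝ) / (a (i + 1) : ℝ))
      + dtail a c k = ∑' n, (c (n + 1) : ℝ) / (a (n + 1) : ℝ) := by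
    have h2 := Summable.sum_add_tsum_nat_add (f := fun n => (c (n + 1) : ℝ) / (a (n + 1) : ℝ)) k hsum
    rw [← h2]
    congr 1
  rw [coe_smul]
  rw [← hsplit, mul_add]
  have hM : ∃ M : ℕ, (u : ℝ) * (∑ i ∈ Finset.range k, (c (i + 1) : ℝ) / (a (i + 1) : ℝ))
      = (M : ℝ) := by
    refine ⟨∑ i ∈ Finset.range k, (u / a (i + 1)) * c (i + 1), ?_⟩
    rw [Finset.mul_sum]
    push_cast
    apply Finset.sum_congr rfl
    intro i hi
    have hii := Finset.mem_range.1 hi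
    have hdvd : a (i + 1) ∣ u := (adv ha (by omega : i + 1 ≤ k)).trans hu
    have hne : (a (i + 1) : ℝ) ≠ 0 := by
      have := apos ha (i + 1); positivity
    rw [Nat.cast_div hdvd hne]
    all_goals field_simp
  obtain ⟨M, hMeq⟩ := hM
  rw [hMeq]
  rw [show ((((M : ℝ) + (u : ℝ) * dtail a c k) : ℝ) : Circle1)
      = (((M : ℝ) : ℝ) : Circle1) + (((u : ℝ) * dtail a c k : ℝ) : Circle1) from rfl,
    coe_nat_zero, zero_add]


/-! ### xiv -/

def xiv (a c : ℕ → ℕ) (m : ℕ) : ℝ := (a m : ℝ) * dtail a c m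

lemma xiv_nonneg (m : ℕ) : 0 ≤ xiv a c m :=
  mul_nonneg (by positivity) (dtail_nonneg m)

lemma xiv_le_one (ha : IsArithSeq a) (hc : ∀ n, 1 ≤ n → c n ≤ ratioSeq a n - 1) (m : ℕ) :
    xiv a c m ≤ 1 := by
  have h1 := dtail_le ha hc m
  have h2 : (0:ℝ) < a m := by exact_mod_cast apos ha m
  calc xiv a c m ≤ (a m : ℝ) * (1 / a m) := mul_le_mul_of_nonneg_left h1 h2.le
    _ = 1 := by field_simp

lemma xiv_rec (ha : IsArithSeq a) (hc : ∀ n, 1 ≤ n → c n ≤ ratioSeq a n - 1)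
    (n : ℕ) (hn : 1 ≤ n) :
    xiv a c (n - 1) * (ratioSeq a n : ℝ) = (c n : ℝ) + xiv a c n := by
  have h1 : dtail a c (n-1) = (c n : ℝ)/(a n) + dtail a c n := by
    have := dtail_succ ha hc (n-1)
    rwa [show n - 1 + 1 = n by omega] at this
  have h2 : (a (n-1) : ℝ) * (ratioSeq a n : ℝ) = a n := by
    rw [armul ha n hn]; ring
  have h3 : (0:ℝ) < a n := by exact_mod_cast apos ha n
  calc xiv a c (n-1) * (ratioSeq a n : ℝ)
      = (a (n-1) : ℝ) * (ratioSeq a n : ℝ) * dtail a c (n-1) := by rw [xiv]; ring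
    _ = (a n : ℝ) * ((c n : ℝ)/(a n) + dtail a c n) := by rw [h2, h1]
    _ = (c n : ℝ) + xiv a c n := by rw [xiv]; field_simp

lemma smul_eq_xiv (ha : IsArithSeq a) (hc : ∀ n, 1 ≤ n → c n ≤ ratioSeq a n - 1)
    (r m : ℕ) :
    ((r * a m : ℕ)) • ((∑' n, ((c (n + 1) : ℝ) / (a (n + 1) : ℝ)) : ℝ) : Circle1)
      = (((r : ℝ) * xiv a c m : ℝ) : Circle1) := by
  rw [smul_tsum ha hc (dvd_mul_left (a m) r)]
  congr 1
  rw [xiv]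
  push_cast
  ring

/-! ### Good positions -/

set_option maxHeartbeats 2000000 in
lemma good (a e c : ℕ → ℕ) (ha : IsArithSeq a) (he : IsArithTypeSeq a e)
    (x : Circle1) (hxe : Tendsto (fun n => (e n) • x) atTop (𝓝 0))
    (hc : ∀ n, 1 ≤ n → c n ≤ ratioSeq a n - 1)
    (hI : {n | 1 ≤ n ∧ c n < ratioSeq a n - 1}.Infinite)
    (hS : {n | 1 ≤ n ∧ c n ≠ 0}.Infinite)
    (hxc : x = ((∑' n, ((c (n + 1) : ℝ) / (a (n + 1) : ℝ)) : ℝ) : Circle1))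
    (ε : ℝ) (hε0 : 0 < ε) (hε8 : ε ≤ 1/8) (N : ℕ) :
    ∃ n β : ℕ, N ≤ n ∧ 1 ≤ n ∧ 1 ≤ β ∧ β + 1 ≤ ratioSeq a n ∧
      (β : ℝ) ≤ ε * (ratioSeq a n : ℝ) ∧
      ∀ r : ℕ, 1 ≤ r → r + 1 ≤ ratioSeq a n → (r * a (n - 1)) ∈ Set.range e →
        ‖((((r * β : ℕ) : ℝ) / (ratioSeq a n : ℝ) : ℝ) : Circle1)‖ ≤ ε := by
  classical
  obtain ⟨M, hM⟩ : ∃ M, ∀ m ≥ M, ‖(e m) • x‖ < ε/2 := by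
    have := (NormedAddCommGroup.tendsto_nhds_zero.1 hxe) (ε/2) (by linarith)
    exact eventually_atTop.1 this
  set T := e M + 1 with hTdef
  have hunif : ∀ u : ℕ, u ∈ Set.range e → T ≤ u → ‖(u : ℕ) • x‖ ≤ ε/2 := by
    rintro u ⟨m, rfl⟩ hTu
    rcases Nat.lt_or_ge m M with h | h
    · exfalso
      have : e m ≤ e M := he.1.monotone h.le
      omega
    · exact (hM m h).le
  set N₁ := N + T + 2 with hN₁def
  have hnorm : ∀ m, N₁ - 1 ≤ m → ‖((xiv a c m : ℝ) : Circle1)‖ ≤ ε/2 := by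
    intro m hm
    have hm1 : 1 ≤ m := by omega
    have hsm : (a m : ℕ) • x = ((xiv a c m : ℝ) : Circle1) := by
      rw [hxc]
      have h := smul_eq_xiv ha hc 1 m
      norm_num at h
      exact h
    rw [← hsm]
    apply hunif (a m) (he.2.1 m hm1)
    have := age ha m
    omega
  have hmin : ∀ m, N₁ - 1 ≤ m → min (xiv a c m) (1 - xiv a c m) ≤ ε/2 := by
    intro m hm
    have h := hnorm m hm
    rwa [norm_coe_min (xiv_nonneg m) (xiv_le_one ha hc m)] at h
  have hclassA : ∀ m, N₁ - 1 ≤ m → xiv a c m ≤ 1/2 → xiv a c m ≤ ε/2 := by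
    intro m hm h; have := hmin m hm; rw [min_eq_left (by linarith)] at this; exact this
  have hclassB : ∀ m, N₁ - 1 ≤ m → ¬(xiv a c m ≤ 1/2) → 1 - xiv a c m ≤ ε/2 := by
    intro m hm h; push_neg at h; have := hmin m hm
    rw [min_eq_right (by linarith)] at this; exact this
  have hkey : ∀ n, N₁ ≤ n → ∀ r : ℕ, 1 ≤ r → (r * a (n - 1)) ∈ Set.range e →
      ‖((((r : ℝ) * xiv a c (n-1)) : ℝ) : Circle1)‖ ≤ ε/2 := by
    intro n hn r hr hre
    have h1 : ((r * a (n-1) : ℕ)) • x = ((((r : ℝ) * xiv a c (n-1)) : ℝ) : Circle1) := by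
      rw [hxc]; exact smul_eq_xiv ha hc r (n-1)
    rw [← h1]
    apply hunif _ hre
    have h2 := age ha (n-1)
    have h3 : a (n-1) ≤ r * a (n-1) := Nat.le_mul_of_pos_left _ (by omega)
    omega
  -- two norm building blocks
  have hQpos : ∀ n, 1 ≤ n → (0:ℝ) < (ratioSeq a n : ℝ) := by
    intro n hn
    have := aq2 ha n hn
    have : (2:ℝ) ≤ (ratioSeq a n : ℝ) := by exact_mod_cast this
    linarith
  have hnormC : ∀ n, N₁ ≤ n → xiv a c n ≤ ε/2 →
      ∀ r : ℕ, 1 ≤ r → r + 1 ≤ ratioSeq a n → (r * a (n - 1)) ∈ Set.range e →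
      ‖((((r : ℝ) * (c n : ℝ) / (ratioSeq a n : ℝ)) : ℝ) : Circle1)‖ ≤ ε := by
    intro n hn hXn r hr hrq hre
    have hn1 : 1 ≤ n := by omega
    have hQ0 := hQpos n hn1
    have hrecn := xiv_rec ha hc n hn1
    have hC : (c n : ℝ) = xiv a c (n-1) * (ratioSeq a n : ℝ) - xiv a c n := by linarith
    have hid : (r : ℝ) * (c n : ℝ) / (ratioSeq a n : ℝ)
        = (r:ℝ) * xiv a c (n-1) + (-((r:ℝ) * xiv a c n / (ratioSeq a n : ℝ))) := by
      rw [hC]; field_simp; ring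
    rw [hid]
    have hw0 : 0 ≤ (r:ℝ) * xiv a c n / (ratioSeq a n : ℝ) := by
      have := xiv_nonneg (a := a) (c := c) n; positivity
    have hrQ : (r:ℝ) ≤ (ratioSeq a n : ℝ) := by exact_mod_cast Nat.le_of_succ_le hrq
    have hwle : (r:ℝ) * xiv a c n / (ratioSeq a n : ℝ) ≤ xiv a c n := by
      rw [div_le_iff₀ hQ0]
      have := xiv_nonneg (a := a) (c := c) n
      nlinarith
    calc ‖((((r:ℝ) * xiv a c (n-1) + (-((r:ℝ) * xiv a c n / (ratioSeq a n : ℝ)))) : ℝ) : Circle1)‖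
        ≤ ‖((((r:ℝ) * xiv a c (n-1)) : ℝ) : Circle1)‖
          + ‖(((-((r:ℝ) * xiv a c n / (ratioSeq a n : ℝ))) : ℝ) : Circle1)‖ :=
            norm_coe_add_le _ _
      _ ≤ ε/2 + ε/2 := by
          refine add_le_add (hkey n hn r hr hre) ?_
          rw [show (((-((r:ℝ) * xiv a c n / (ratioSeq a n : ℝ))) : ℝ) : Circle1)
              = -((((r:ℝ) * xiv a c n / (ratioSeq a n : ℝ)) : ℝ) : Circle1) from rfl, norm_neg]
          exact (norm_coe_le_of_nonneg hw0).trans (by linarith)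
      _ = ε := by ring
  have hnormC1 : ∀ n, N₁ ≤ n → 1 - xiv a c n ≤ ε/2 →
      ∀ r : ℕ, 1 ≤ r → r + 1 ≤ ratioSeq a n → (r * a (n - 1)) ∈ Set.range e →
      ‖((((r : ℝ) * ((c n : ℝ) + 1) / (ratioSeq a n : ℝ)) : ℝ) : Circle1)‖ ≤ ε := by
    intro n hn hXn r hr hrq hre
    have hn1 : 1 ≤ n := by omega
    have hQ0 := hQpos n hn1
    have hrecn := xiv_rec ha hc n hn1
    have hC : (c n : ℝ) + 1
        = xiv a c (n-1) * (ratioSeq a n : ℝ) + (1 - xiv a c n) := by linarith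
    have hid : (r : ℝ) * ((c n : ℝ) + 1) / (ratioSeq a n : ℝ)
        = (r:ℝ) * xiv a c (n-1) + ((r:ℝ) * (1 - xiv a c n) / (ratioSeq a n : ℝ)) := by
      rw [hC]; field_simp
    rw [hid]
    have hx1 := xiv_le_one ha hc n
    have hw0 : 0 ≤ (r:ℝ) * (1 - xiv a c n) / (ratioSeq a n : ℝ) := by
      have h1 : 0 ≤ 1 - xiv a c n := by linarith
      positivity
    have hrQ : (r:ℝ) ≤ (ratioSeq a n : ℝ) := by exact_mod_cast Nat.le_of_succ_le hrq
    have hwle : (r:ℝ) * (1 - xiv a c n) / (ratioSeq a n : ℝ) ≤ 1 - xiv a c n := by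
      rw [div_le_iff₀ hQ0]
      nlinarith
    calc ‖((((r:ℝ) * xiv a c (n-1) + ((r:ℝ) * (1 - xiv a c n) / (ratioSeq a n : ℝ))) : ℝ) : Circle1)‖
        ≤ ‖((((r:ℝ) * xiv a c (n-1)) : ℝ) : Circle1)‖
          + ‖((((r:ℝ) * (1 - xiv a c n) / (ratioSeq a n : ℝ)) : ℝ) : Circle1)‖ :=
            norm_coe_add_le _ _
      _ ≤ ε/2 + ε/2 := by
          refine add_le_add (hkey n hn r hr hre) ?_
          exact (norm_coe_le_of_nonneg hw0).trans (by linarith)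
      _ = ε := by ring
  -- dichotomy
  by_cases hall : ∀ m, N₁ - 1 ≤ m → ((xiv a c m ≤ 1/2) ↔ (xiv a c (m+1) ≤ 1/2))
  · have hsame : ∀ m, N₁ - 1 ≤ m → ((xiv a c m ≤ 1/2) ↔ (xiv a c (N₁-1) ≤ 1/2)) := by
      intro m hm
      induction m, hm using Nat.le_induction with
      | base => exact Iff.rfl
      | succ m hm ih => exact ((hall m hm).symm.trans ih)
    by_cases hA : xiv a c (N₁ - 1) ≤ 1/2
    · -- constant A : use a support point, β = c n
      obtain ⟨n, hnsupp, hngt⟩ := hS.exists_gt N₁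
      have hn1 : 1 ≤ n := hnsupp.1
      have hnN₁ : N₁ ≤ n := by omega
      have hq2 := aq2 ha n hn1
      have hXp : xiv a c (n-1) ≤ ε/2 :=
        hclassA (n-1) (by omega) ((hsame (n-1) (by omega)).2 hA)
      have hXn : xiv a c n ≤ ε/2 :=
        hclassA n (by omega) ((hsame n (by omega)).2 hA)
      have hrecn := xiv_rec ha hc n hn1
      have hQ0 := hQpos n hn1
      have hcb := hc n hn1
      have hczero : c n ≠ 0 := hnsupp.2
      refine ⟨n, c n, by omega, hn1, by omega, by omega, ?_, ?_⟩
      · have hxn0 := xiv_nonneg (a := a) (c := c) n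
        have hp1 := mul_le_mul_of_nonneg_right hXp hQ0.le
        have hp2 := mul_le_mul_of_nonneg_right (show ε/2 ≤ ε by linarith) hQ0.le
        linarith
      · intro r hr hrq hre
        have : (((r * c n : ℕ) : ℝ)) = (r:ℝ) * (c n : ℝ) := by push_cast; ring
        rw [this]
        exact hnormC n hnN₁ hXn r hr hrq hre
    · -- constant B : use a point of I, β = q n - 1 - c n
      obtain ⟨n, hnI, hngt⟩ := hI.exists_gt N₁
      have hn1 : 1 ≤ n := hnI.1
      have hnN₁ : N₁ ≤ n := by omega
      have hq2 := aq2 ha n hn1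
      have hcI : c n < ratioSeq a n - 1 := hnI.2
      have hXp : 1 - xiv a c (n-1) ≤ ε/2 :=
        hclassB (n-1) (by omega) (fun h => hA ((hsame (n-1) (by omega)).1 h))
      have hXn : 1 - xiv a c n ≤ ε/2 :=
        hclassB n (by omega) (fun h => hA ((hsame n (by omega)).1 h))
      have hrecn := xiv_rec ha hc n hn1
      have hQ0 := hQpos n hn1
      have hcast : ((ratioSeq a n - 1 - c n : ℕ) : ℝ)
          = (ratioSeq a n : ℝ) - 1 - (c n : ℝ) := by
        have h1 : c n ≤ ratioSeq a n - 1 := by omega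
        have h2 : 1 ≤ ratioSeq a n := by omega
        rw [Nat.cast_sub h1, Nat.cast_sub h2]
        push_cast
        ring
      refine ⟨n, ratioSeq a n - 1 - c n, by omega, hn1, by omega, by omega, ?_, ?_⟩
      · rw [hcast]
        have hxp1 := xiv_le_one ha hc (n-1)
        have hxn1 := xiv_le_one ha hc n
        have hp1 := mul_le_mul_of_nonneg_right hXp hQ0.le
        have hp2 := mul_le_mul_of_nonneg_right (show ε/2 ≤ ε by linarith) hQ0.le
        linarith
      · intro r hr hrq hre
        have hid2 : (((r * (ratioSeq a n - 1 - c n) : ℕ) : ℝ)) / (ratioSeq a n : ℝ)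
            = (r : ℝ) - ((r:ℝ) * ((c n : ℝ) + 1) / (ratioSeq a n : ℝ)) := by
          rw [Nat.cast_mul, hcast]
          field_simp
          ring
        rw [hid2, norm_coe_nat_sub]
        exact hnormC1 n hnN₁ hXn r hr hrq hre
  · push_neg at hall
    obtain ⟨m, hm, hne⟩ := hall
    have hn1 : 1 ≤ m + 1 := by omega
    have hnN₁ : N₁ ≤ m + 1 := by omega
    have hq2 := aq2 ha (m+1) hn1
    have hQ2R : (2:ℝ) ≤ (ratioSeq a (m+1) : ℝ) := by exact_mod_cast hq2
    have hQ0 := hQpos (m+1) hn1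
    have hrecn := xiv_rec ha hc (m+1) hn1
    rw [Nat.add_sub_cancel] at hrecn
    have hcb := hc (m+1) hn1
    have hxn0 := xiv_nonneg (a := a) (c := c) (m+1)
    have hxn1 := xiv_le_one ha hc (m+1)
    have hxp0 := xiv_nonneg (a := a) (c := c) m
    have hxp1 := xiv_le_one ha hc m
    rcases hne with ⟨hA, hB'⟩ | ⟨hA', hB⟩
    · -- AB transition, β = c (m+1) + 1
      have hXp : xiv a c m ≤ ε/2 := hclassA m hm hA
      have hXn : 1 - xiv a c (m+1) ≤ ε/2 := hclassB (m+1) (by omega) (not_le.2 hB')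
      have hp1 := mul_le_mul_of_nonneg_right hXp hQ0.le
      have hreal : (c (m+1) : ℝ) + 1
          ≤ (ε/2) * (ratioSeq a (m+1) : ℝ) + ε/2 := by linarith
      have hc2 : c (m+1) + 2 ≤ ratioSeq a (m+1) := by
        have hp3 := mul_le_mul_of_nonneg_right (show ε/2 ≤ 1/16 by linarith) hQ0.le
        have : (c (m+1) : ℝ) + 2 ≤ (ratioSeq a (m+1) : ℝ) := by linarith
        exact_mod_cast this
      refine ⟨m + 1, c (m+1) + 1, by omega, hn1, by omega, by omega, ?_, ?_⟩
      · push_cast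
        have hp4 : (0:ℝ) ≤ ε * ((ratioSeq a (m+1) : ℝ) - 2) :=
          mul_nonneg (by linarith) (by linarith)
        linarith
      · intro r hr hrq hre
        rw [Nat.add_sub_cancel] at hre
        have hcastm : (((r * (c (m+1) + 1) : ℕ) : ℝ)) = (r:ℝ) * ((c (m+1) : ℝ) + 1) := by
          push_cast; ring
        rw [hcastm]
        have h5 := hnormC1 (m+1) hnN₁ hXn r hr hrq
        rw [Nat.add_sub_cancel] at h5
        exact h5 hre
    · -- BA transition, β = q (m+1) - c (m+1)
      have hXp : 1 - xiv a c m ≤ ε/2 := hclassB m hm (not_le.2 hA')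
      have hXn : xiv a c (m+1) ≤ ε/2 := hclassA (m+1) (by omega) hB
      have hp1 := mul_le_mul_of_nonneg_right hXp hQ0.le
      have hcpos : 1 ≤ c (m+1) := by
        have hp5 := mul_le_mul_of_nonneg_left hQ2R (show (0:ℝ) ≤ 1 - ε/2 by linarith)
        have hp6 := mul_le_mul_of_nonneg_right
          (show 1 - ε/2 ≤ xiv a c m by linarith) hQ0.le
        have h7 : (0:ℝ) < (c (m+1) : ℝ) := by linarith
        have : 0 < c (m+1) := by exact_mod_cast h7
        omega
      have hcast : ((ratioSeq a (m+1) - c (m+1) : ℕ) : ℝ)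
          = (ratioSeq a (m+1) : ℝ) - (c (m+1) : ℝ) := by
        have h1 : c (m+1) ≤ ratioSeq a (m+1) := by omega
        rw [Nat.cast_sub h1]
      refine ⟨m + 1, ratioSeq a (m+1) - c (m+1), by omega, hn1, by omega, by omega, ?_, ?_⟩
      · rw [hcast]
        have hp4 : (0:ℝ) ≤ ε * ((ratioSeq a (m+1) : ℝ) - 2) :=
          mul_nonneg (by linarith) (by linarith)
        linarith
      · intro r hr hrq hre
        rw [Nat.add_sub_cancel] at hre
        have hid2 : (((r * (ratioSeq a (m+1) - c (m+1)) : ℕ) : ℝ)) / (ratioSeq a (m+1) : ℝ)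
            = (r : ℝ) - ((r:ℝ) * (c (m+1) : ℝ) / (ratioSeq a (m+1) : ℝ)) := by
          rw [Nat.cast_mul, hcast]
          field_simp
        rw [hid2, norm_coe_nat_sub]
        have h5 := hnormC (m+1) hnN₁ hXn r hr hrq
        rw [Nat.add_sub_cancel] at h5
        exact h5 hre

lemma rec_choice (P : ℕ → ℕ → ℕ → Prop) (g : ℕ → ℕ → ℕ) (N0 : ℕ)
    (h : ∀ i N, ∃ n β, N ≤ n ∧ P i n β) :
    ∃ s B : ℕ → ℕ, N0 ≤ s 0 ∧ (∀ i, P i (s i) (B i)) ∧ (∀ i, g i (s i) ≤ s (i + 1)) := by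
  have h' : ∀ i N, ∃ p : ℕ × ℕ, N ≤ p.1 ∧ P i p.1 p.2 := by
    intro i N
    obtain ⟨n, β, h1, h2⟩ := h i N
    exact ⟨(n, β), h1, h2⟩
  choose f hf1 hf2 using h'
  refine ⟨fun i => (Nat.rec (f 0 N0)
      (fun i ih => f (i + 1) (g i ih.1)) i : ℕ × ℕ).1,
    fun i => (Nat.rec (f 0 N0)
      (fun i ih => f (i + 1) (g i ih.1)) i : ℕ × ℕ).2, hf1 0 N0, ?_, ?_⟩
  · intro i
    cases i with
    | zero => exact hf2 0 N0
    | succ i => exact hf2 (i + 1) _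
  · intro i
    exact hf1 (i + 1) _

end ST14

set_option maxHeartbeats 4000000 in
/-- if `t_{(e_n)}(𝕋)` contains an element of infinite support, then it
contains an element `y` with infinite support `S` such that `S ∩ (S + 1) = ∅`, `S` is
`q`-divergent, and `c_n(y)/q_n → 0` along `S`. -/
theorem exists_sparse_support_element (a e : ℕ → ℕ) (ha : IsArithSeq a)
    (he : IsArithTypeSeq a e)
    (hx : ∃ x ∈ charSub e, ∃ c : ℕ → ℕ, IsCanonicalRep a c x ∧ (suppOf c).Infinite) :
    ∃ y ∈ charSub e, ∃ c' : ℕ → ℕ, IsCanonicalRep a c' y ∧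
      (suppOf c').Infinite ∧
      (∀ n ∈ suppOf c', n + 1 ∉ suppOf c') ∧
      Tendsto (fun n => ratioSeq a n) (atTop ⊓ 𝓟 (suppOf c')) atTop ∧
      Tendsto (fun n => (c' n : ℝ) / (ratioSeq a n : ℝ))
        (atTop ⊓ 𝓟 (suppOf c')) (nhds 0) := by
  classical
  obtain ⟨x, hxe, c, ⟨hc, hI, hxc⟩, hS⟩ := hx
  have hxe' : Tendsto (fun n => (e n) • x) atTop (𝓝 0) := hxe
  -- Step 1: good positions with parameter 1/(8(i+1))
  have hstep : ∀ i N₀ : ℕ, ∃ n β : ℕ, N₀ ≤ n ∧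
      (1 ≤ n ∧ 1 ≤ β ∧ β + 1 ≤ ratioSeq a n ∧
        ((β : ℝ) ≤ 1 / (8 * ((i : ℝ) + 1)) * (ratioSeq a n : ℝ)) ∧
        ∀ r : ℕ, 1 ≤ r → r + 1 ≤ ratioSeq a n → (r * a (n - 1)) ∈ Set.range e →
          ‖((((r * β : ℕ) : ℝ) / (ratioSeq a n : ℝ) : ℝ) : Circle1)‖
            ≤ 1 / (8 * ((i : ℝ) + 1))) := by
    intro i N₀
    have hpos : (0 : ℝ) < 1 / (8 * ((i : ℝ) + 1)) := by positivity
    have hle : (1 : ℝ) / (8 * ((i : ℝ) + 1)) ≤ 1 / 8 := by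
      rw [div_le_div_iff₀ (by positivity) (by norm_num)]
      have : (0 : ℝ) ≤ (i : ℝ) := Nat.cast_nonneg i
      linarith
    obtain ⟨n, β, h1, h2, h3, h4, h5, h6⟩ :=
      ST14.good a e c ha he x hxe' hc hI hS hxc (1 / (8 * ((i : ℝ) + 1))) hpos hle N₀
    exact ⟨n, β, h1, h2, h3, h4, h5, h6⟩
  -- Step 2: recursive choice of positions
  obtain ⟨s, B, hs0, hPs, hsep⟩ := ST14.rec_choice
    (fun i n β => 1 ≤ n ∧ 1 ≤ β ∧ β + 1 ≤ ratioSeq a n ∧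
      ((β : ℝ) ≤ 1 / (8 * ((i : ℝ) + 1)) * (ratioSeq a n : ℝ)) ∧
      ∀ r : ℕ, 1 ≤ r → r + 1 ≤ ratioSeq a n → (r * a (n - 1)) ∈ Set.range e →
        ‖((((r * β : ℕ) : ℝ) / (ratioSeq a n : ℝ) : ℝ) : Circle1)‖
          ≤ 1 / (8 * ((i : ℝ) + 1)))
    (fun i n => (i + 1) * a n + n + 2) 1 hstep
  have hs1 : ∀ i, 1 ≤ s i := fun i => (hPs i).1
  have hB1 : ∀ i, 1 ≤ B i := fun i => (hPs i).2.1
  have hsep' : ∀ i, (i + 1) * a (s i) + s i + 2 ≤ s (i + 1) := hsep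
  have hsmono : StrictMono s := strictMono_nat_of_lt_succ (fun i => by
    have h1 := hsep' i
    have h2 : 0 < a (s i) := ST14.apos ha (s i)
    nlinarith)
  -- Step 3: digits b
  let b : ℕ → ℕ := fun n => if h : ∃ i, s i = n then B (Classical.choose h) else 0
  have hb_s : ∀ i, b (s i) = B i := by
    intro i
    have hex : ∃ j, s j = s i := ⟨i, rfl⟩
    have h1 : b (s i) = B (Classical.choose hex) := dif_pos hex
    rw [h1, hsmono.injective (Classical.choose_spec hex)]
  have hb_0 : ∀ n, (∀ i, s i ≠ n) → b n = 0 := by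
    intro n h
    exact dif_neg (fun ⟨i, hi⟩ => h i hi)
  have hbv : ∀ n, 1 ≤ n → b n ≤ ratioSeq a n - 1 := by
    intro n hn
    by_cases hex : ∃ i, s i = n
    · obtain ⟨i, rfl⟩ := hex
      rw [hb_s i]
      have := (hPs i).2.2.1
      omega
    · push_neg at hex
      rw [hb_0 n hex]
      exact Nat.zero_le _
  -- support characterization
  have hsupp_eq : suppOf b = Set.range s := by
    ext n
    constructor
    · rintro ⟨hn1, hbn⟩
      by_contra hng
      exact hbn (hb_0 n (fun i hi => hng ⟨i, hi⟩))
    · rintro ⟨i, rfl⟩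
      refine ⟨hs1 i, ?_⟩
      rw [hb_s i]
      have := hB1 i
      omega
  have hnocons : ∀ n ∈ suppOf b, n + 1 ∉ suppOf b := by
    intro n hn hn1
    rw [hsupp_eq] at hn hn1
    obtain ⟨i, rfl⟩ := hn
    obtain ⟨j, hj⟩ := hn1
    have hij : i < j := hsmono.lt_iff_lt.1 (by omega)
    have h1 : s (i + 1) ≤ s j := hsmono.monotone hij
    have h2 := hsep' i
    have h3 : 0 < a (s i) := ST14.apos ha (s i)
    nlinarith
  have hqB : ∀ i : ℕ, 8 * (i + 1) ≤ ratioSeq a (s i) := by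
    intro i
    have h1 := (hPs i).2.2.2.1
    have hB1R : (1 : ℝ) ≤ (B i : ℝ) := by exact_mod_cast hB1 i
    have hpos : (0 : ℝ) < 8 * ((i : ℝ) + 1) := by positivity
    have h3 : (8 * ((i : ℝ) + 1)) * (1 / (8 * ((i : ℝ) + 1)) * (ratioSeq a (s i) : ℝ))
        = (ratioSeq a (s i) : ℝ) := by field_simp
    have h4 := mul_le_mul_of_nonneg_left h1 hpos.le
    have h5 := mul_le_mul_of_nonneg_left hB1R hpos.le
    have : (8 * ((i : ℝ) + 1)) ≤ (ratioSeq a (s i) : ℝ) := by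
      rw [h3] at h4
      linarith
    exact_mod_cast this
  -- Step 4: y ∈ charSub e
  have hmem : Tendsto (fun m => (e m) •
      (((∑' n, ((b (n + 1) : ℝ) / (a (n + 1) : ℝ))) : ℝ) : Circle1)) atTop (𝓝 0) := by
    rw [NormedAddCommGroup.tendsto_nhds_zero]
    intro ε hε
    obtain ⟨i₀, hi₀⟩ := exists_nat_gt (2 / ε)
    rw [eventually_atTop]
    refine ⟨a (s i₀) + 1, fun m hm => ?_⟩
    have hu_ge : a (s i₀) + 1 ≤ e m := le_trans hm he.1.le_apply
    obtain ⟨k, hk1, r, hr1, hr2, hu⟩ := he.2.2 ⟨m, rfl⟩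
    have hq2k := ST14.aq2 ha k hk1
    have hks : s i₀ < k := by
      by_contra hkle
      push_neg at hkle
      have h1 : r * a (k - 1) ≤ (ratioSeq a k - 1) * a (k - 1) :=
        Nat.mul_le_mul_right _ hr2
      have h2 : ratioSeq a k * a (k - 1) = a k := ST14.amul ha k hk1
      have h5 : (ratioSeq a k - 1) * a (k - 1) = a k - a (k - 1) := by
        rw [Nat.sub_mul, h2, one_mul]
      have h3 : a k ≤ a (s i₀) := ha.2.1.monotone hkle
      have h4 : 0 < a (k - 1) := ST14.apos ha (k - 1)
      omega
    have hex : ∃ i, k ≤ s i := ⟨k, hsmono.le_apply⟩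
    have hki1 : k ≤ s (Nat.find hex) := Nat.find_spec hex
    set i1 := Nat.find hex with hi1def
    have hlt : ∀ i, i < i1 → s i < k := fun i hi => not_le.1 (Nat.find_min hex hi)
    have hi01 : i₀ < i1 := by
      by_contra hle
      push_neg at hle
      have := hsmono.monotone hle
      omega
    have hadvd : a (k - 1) ∣ e m := by rw [hu]; exact dvd_mul_left _ _
    have hrw : (e m) • (((∑' n, ((b (n + 1) : ℝ) / (a (n + 1) : ℝ))) : ℝ) : Circle1)
        = (((e m : ℝ) * ST14.dtail a b (k - 1) : ℝ) : Circle1) :=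
      ST14.smul_tsum ha hbv hadvd
    have hbz1 : ∀ t, k - 1 < t → t ≤ s i1 - 1 → b t = 0 := by
      intro t ht1 ht2
      apply hb_0
      intro i hi
      rcases Nat.lt_or_ge i i1 with h | h
      · have := hlt i h; omega
      · have := hsmono.monotone h; omega
    have he1 : ST14.dtail a b (k - 1) = ST14.dtail a b (s i1 - 1) :=
      ST14.dtail_congr_zero ha hbv (by omega) hbz1
    have he2 : ST14.dtail a b (s i1 - 1)
        = (B i1 : ℝ) / (a (s i1) : ℝ) + ST14.dtail a b (s i1) := by
      have h := ST14.dtail_succ ha hbv (s i1 - 1)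
      rw [show s i1 - 1 + 1 = s i1 by have := hs1 i1; omega] at h
      rw [h, hb_s i1]
    have hbz2 : ∀ t, s i1 < t → t ≤ s (i1 + 1) - 1 → b t = 0 := by
      intro t ht1 ht2
      apply hb_0
      intro i hi
      rcases Nat.lt_or_ge i (i1 + 1) with h | h
      · have : s i ≤ s i1 := hsmono.monotone (by omega)
        omega
      · have := hsmono.monotone h
        omega
    have hsle : s i1 ≤ s (i1 + 1) - 1 := by
      have h1 := hsep' i1
      have h2 : 0 < a (s i1) := ST14.apos ha (s i1)
      omega
    have he3 : ST14.dtail a b (s i1) = ST14.dtail a b (s (i1 + 1) - 1) :=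
      ST14.dtail_congr_zero ha hbv hsle hbz2
    have he4 : ST14.dtail a b (s (i1 + 1) - 1) ≤ 1 / (a (s (i1 + 1) - 1) : ℝ) :=
      ST14.dtail_le ha hbv _
    have haK : (i1 + 1) * a (s i1) ≤ a (s (i1 + 1) - 1) := by
      have h1 := ST14.age ha (s (i1 + 1) - 1)
      have h2 := hsep' i1
      omega
    have huR : (e m : ℝ) = (r : ℝ) * (a (k - 1) : ℝ) := by
      rw [hu]; push_cast; ring
    have hsplit : (e m : ℝ) * ST14.dtail a b (k - 1)
        = ((r : ℝ) * (a (k - 1) : ℝ)) * ((B i1 : ℝ) / (a (s i1) : ℝ))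
          + ((r : ℝ) * (a (k - 1) : ℝ)) * ST14.dtail a b (s i1) := by
      rw [he1, he2, huR]
      ring
    rw [hrw, hsplit]
    have hrb : r * a (k - 1) ≤ a k := by
      calc r * a (k - 1) ≤ ratioSeq a k * a (k - 1) :=
            Nat.mul_le_mul_right _ (by omega)
        _ = a k := ST14.amul ha k hk1
    have hrbR : (r : ℝ) * (a (k - 1) : ℝ) ≤ (a k : ℝ) := by exact_mod_cast hrb
    have hakle : (a k : ℝ) ≤ (a (s i1) : ℝ) := by
      exact_mod_cast ha.2.1.monotone hki1
    have hd0 := ST14.dtail_nonneg (a := a) (c := b) (s i1)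
    have hra0 : (0 : ℝ) ≤ (r : ℝ) * (a (k - 1) : ℝ) := by positivity
    have hsipos : (0 : ℝ) < (a (s i1) : ℝ) := by exact_mod_cast ST14.apos ha (s i1)
    have hsipos' : (0 : ℝ) < (a (s (i1 + 1) - 1) : ℝ) := by
      exact_mod_cast ST14.apos ha (s (i1 + 1) - 1)
    have hsecond : ((r : ℝ) * (a (k - 1) : ℝ)) * ST14.dtail a b (s i1)
        ≤ 1 / ((i1 : ℝ) + 1) := by
      have h1 : ST14.dtail a b (s i1) ≤ 1 / (a (s (i1 + 1) - 1) : ℝ) := he3 ▸ he4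
      have h3 : ((i1 : ℝ) + 1) * (a (s i1) : ℝ) ≤ (a (s (i1 + 1) - 1) : ℝ) := by
        exact_mod_cast haK
      calc ((r : ℝ) * (a (k - 1) : ℝ)) * ST14.dtail a b (s i1)
          ≤ (a (s i1) : ℝ) * (1 / (a (s (i1 + 1) - 1) : ℝ)) := by
            apply mul_le_mul (hrbR.trans hakle) h1 hd0 hsipos.le
        _ ≤ 1 / ((i1 : ℝ) + 1) := by
            rw [mul_one_div, div_le_div_iff₀ hsipos' (by positivity)]
            linarith
    have hq2si := ST14.aq2 ha (s i1) (hs1 i1)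
    have hQ0si : (0 : ℝ) < (ratioSeq a (s i1) : ℝ) := by
      have : (2 : ℝ) ≤ (ratioSeq a (s i1) : ℝ) := by exact_mod_cast hq2si
      linarith
    have harm := ST14.armul ha (s i1) (hs1 i1)
    have hApos : (0 : ℝ) < (a (s i1 - 1) : ℝ) := by
      exact_mod_cast ST14.apos ha (s i1 - 1)
    have hfirst : ‖((((r : ℝ) * (a (k - 1) : ℝ)) * ((B i1 : ℝ) / (a (s i1) : ℝ)) : ℝ) : Circle1)‖
        ≤ 1 / (8 * ((i1 : ℝ) + 1)) := by
      rcases eq_or_lt_of_le hki1 with heq | hlt2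
      · -- k = s i1
        have hank : (a (s i1) : ℝ) = (ratioSeq a (s i1) : ℝ) * (a (k - 1) : ℝ) := by
          rw [heq]; exact harm
        have hAne : (0 : ℝ) < (a (k - 1) : ℝ) := by
          exact_mod_cast ST14.apos ha (k - 1)
        have hidf : ((r : ℝ) * (a (k - 1) : ℝ)) * ((B i1 : ℝ) / (a (s i1) : ℝ))
            = ((r * B i1 : ℕ) : ℝ) / (ratioSeq a (s i1) : ℝ) := by
          rw [Nat.cast_mul, hank]
          field_simp
        rw [hidf]
        apply (hPs i1).2.2.2.2 r hr1
        · rw [← heq]; omega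
        · rw [← heq]; exact ⟨m, hu⟩
      · -- k < s i1
        have hk_le : (a k : ℝ) ≤ (a (s i1 - 1) : ℝ) := by
          exact_mod_cast ha.2.1.monotone (by omega : k ≤ s i1 - 1)
        have hBQ0 : (0 : ℝ) ≤ (B i1 : ℝ) / (a (s i1) : ℝ) := by positivity
        have hfnn : (0 : ℝ) ≤ ((r : ℝ) * (a (k - 1) : ℝ)) * ((B i1 : ℝ) / (a (s i1) : ℝ)) := by
          positivity
        refine (ST14.norm_coe_le_of_nonneg hfnn).trans ?_
        calc ((r : ℝ) * (a (k - 1) : ℝ)) * ((B i1 : ℝ) / (a (s i1) : ℝ))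
            ≤ (a (s i1 - 1) : ℝ) * ((B i1 : ℝ) / (a (s i1) : ℝ)) :=
              mul_le_mul_of_nonneg_right (hrbR.trans hk_le) hBQ0
          _ = (B i1 : ℝ) / (ratioSeq a (s i1) : ℝ) := by
              rw [harm]
              field_simp
          _ ≤ 1 / (8 * ((i1 : ℝ) + 1)) := by
              rw [div_le_div_iff₀ hQ0si (by positivity : (0:ℝ) < 8 * ((i1 : ℝ) + 1))]
              have h1 := (hPs i1).2.2.2.1
              have h3 : (B i1 : ℝ) * (8 * ((i1 : ℝ) + 1))
                  ≤ (1 / (8 * ((i1 : ℝ) + 1)) * (ratioSeq a (s i1) : ℝ)) * (8 * ((i1 : ℝ) + 1)) :=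
                mul_le_mul_of_nonneg_right h1 (by positivity)
              have h4 : (1 / (8 * ((i1 : ℝ) + 1)) * (ratioSeq a (s i1) : ℝ)) * (8 * ((i1 : ℝ) + 1))
                  = (ratioSeq a (s i1) : ℝ) := by field_simp
              linarith
    have hsec0 : (0 : ℝ) ≤ ((r : ℝ) * (a (k - 1) : ℝ)) * ST14.dtail a b (s i1) :=
      mul_nonneg hra0 hd0
    have htot := (ST14.norm_coe_add_le
      (((r : ℝ) * (a (k - 1) : ℝ)) * ((B i1 : ℝ) / (a (s i1) : ℝ)))
      (((r : ℝ) * (a (k - 1) : ℝ)) * ST14.dtail a b (s i1)))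
    have hpos1 : (0 : ℝ) < (i1 : ℝ) + 1 := by positivity
    have hi1R : ((i₀ : ℝ) + 2) ≤ (i1 : ℝ) + 1 := by
      have : i₀ + 2 ≤ i1 + 1 := by omega
      exact_mod_cast this
    have ha1 : 1 / (8 * ((i1 : ℝ) + 1)) ≤ 1 / ((i1 : ℝ) + 1) := by
      apply one_div_le_one_div_of_le hpos1
      linarith
    have ha2 : 2 / ((i1 : ℝ) + 1) ≤ 2 / ((i₀ : ℝ) + 2) :=
      div_le_div_of_nonneg_left (by norm_num) (by positivity) hi1R
    have ha3 : 2 / ((i₀ : ℝ) + 2) < ε := by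
      rw [div_lt_iff₀ (by positivity)]
      rw [div_lt_iff₀ hε] at hi₀
      nlinarith
    calc ‖((((r : ℝ) * (a (k - 1) : ℝ)) * ((B i1 : ℝ) / (a (s i1) : ℝ))
            + ((r : ℝ) * (a (k - 1) : ℝ)) * ST14.dtail a b (s i1) : ℝ) : Circle1)‖
        ≤ _ := htot
      _ ≤ 1 / (8 * ((i1 : ℝ) + 1)) + 1 / ((i1 : ℝ) + 1) :=
          add_le_add hfirst ((ST14.norm_coe_le_of_nonneg hsec0).trans hsecond)
      _ < ε := by
          have hdd : 2 / ((i1 : ℝ) + 1) = 1 / ((i1 : ℝ) + 1) + 1 / ((i1 : ℝ) + 1) := by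
            ring
          linarith
  -- Step 5: assemble
  refine ⟨(((∑' n, ((b (n + 1) : ℝ) / (a (n + 1) : ℝ))) : ℝ) : Circle1), hmem, b,
    ⟨hbv, ?_, rfl⟩, ?_, hnocons, ?_, ?_⟩
  · -- infinitely many n with b n < q n - 1
    have hinj : Function.Injective (fun i => s i + 1) := by
      intro i j h
      have h' : s i + 1 = s j + 1 := h
      exact hsmono.injective (by omega)
    apply (Set.infinite_range_of_injective hinj).mono
    rintro n ⟨i, rfl⟩
    simp only [Set.mem_setOf_eq]
    have hb0' : b (s i + 1) = 0 := by
      apply hb_0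
      intro j hj
      have hij : i < j := hsmono.lt_iff_lt.1 (by omega)
      have h1 : s (i + 1) ≤ s j := hsmono.monotone hij
      have h2 := hsep' i
      have h3 : 0 < a (s i) := ST14.apos ha (s i)
      nlinarith
    have hq2' := ST14.aq2 ha (s i + 1) (by omega)
    constructor
    · omega
    · rw [hb0']; omega
  · -- suppOf b infinite
    rw [hsupp_eq]
    exact Set.infinite_range_of_injective hsmono.injective
  · -- q-divergence
    rw [tendsto_atTop]
    intro C
    rw [eventually_inf_principal]
    filter_upwards [eventually_ge_atTop (s C)] with n hn hns
    rw [hsupp_eq] at hns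
    obtain ⟨j, rfl⟩ := hns
    have hCj : C ≤ j := hsmono.le_iff_le.1 hn
    have := hqB j
    omega
  · -- ratio tendsto 0
    rw [Metric.tendsto_nhds]
    intro ε hε
    obtain ⟨J, hJ⟩ := exists_nat_gt (1 / ε)
    rw [eventually_inf_principal]
    filter_upwards [eventually_ge_atTop (s J)] with n hn hns
    rw [hsupp_eq] at hns
    obtain ⟨j, rfl⟩ := hns
    have hJj : J ≤ j := hsmono.le_iff_le.1 hn
    rw [Real.dist_eq, sub_zero, hb_s j]
    have hq2j := ST14.aq2 ha (s j) (hs1 j)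
    have hQ0 : (0 : ℝ) < (ratioSeq a (s j) : ℝ) := by
      have : (2 : ℝ) ≤ (ratioSeq a (s j) : ℝ) := by exact_mod_cast hq2j
      linarith
    have h1 := (hPs j).2.2.2.1
    have hval : (B j : ℝ) / (ratioSeq a (s j) : ℝ) ≤ 1 / (8 * ((j : ℝ) + 1)) := by
      rw [div_le_iff₀ hQ0]
      have h2 : 1 / (8 * ((j : ℝ) + 1)) * (ratioSeq a (s j) : ℝ)
          = (ratioSeq a (s j) : ℝ) * (1 / (8 * ((j : ℝ) + 1))) := by ring
      linarith [h1, h2 ▸ h1]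
    rw [abs_of_nonneg (by positivity)]
    have hfin : 1 / (8 * ((j : ℝ) + 1)) < ε := by
      rw [div_lt_iff₀ (by positivity)]
      rw [div_lt_iff₀ hε] at hJ
      have hJjR : (J : ℝ) ≤ (j : ℝ) := by exact_mod_cast hJj
      nlinarith [hε.le]
    linarith
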